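/- Let n ≥ 3, and suppose f : C_n → ℝ is a partial polymatroid on the n-cycle scenario satisfying f({1,n}) = f({1}) + f({n}) (the closing pair is 'independent'), together with the basic inequalities f({i}) ≤ f({i,i+1}), f({i+1}) ≤ f({i,i+1}), and f({i,i+1}) ≤ f({i}) + f({i+1}) for all i mod n. If additionally the chain inequality Σ_{i=1}^{n} f({i}) ≤ Σ_{i=1}^{n−1} f({i,i+1}) holds, then all n cycle inequalities f({i,i+1}) + Σ_{j≠i,i+1} f({j}) ≤ Σ_{j≠i} f({j,j+1}) hold (indices mod n). -/
import Mathlib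


/-- Case 2 reduction: if the closing pair of the n-cycle is independent,
the chain inequality implies all n cycle inequalities. -/
theorem chain_implies_cycle_inequalities {n : ℕ} (hn : 3 ≤ n)
    (f : Finset (Fin n) → ℝ)
    (h0 : f ∅ = 0)
    (h1 : ∀ i : Fin n, 0 ≤ f {i})
    (h2 : ∀ i : Fin n, f {i} ≤ f {i, i + ⟨1, by omega⟩})
    (h3 : ∀ i : Fin n, f {i + ⟨1, by omega⟩} ≤ f {i, i + ⟨1, by omega⟩})
    (h4 : ∀ i : Fin n, f {i, i + ⟨1, by omega⟩} ≤ f {i} + f {i + ⟨1, by omega⟩})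
    -- the closing pair {1, n} is independent
    (hind : f {(⟨0, by omega⟩ : Fin n), ⟨n - 1, by omega⟩}
      = f {(⟨0, by omega⟩ : Fin n)} + f {(⟨n - 1, by omega⟩ : Fin n)})
    -- the chain inequality
    (hchain : ∑ i : Fin n, f {i}
      ≤ ∑ i ∈ Finset.univ \ {(⟨n - 1, by omega⟩ : Fin n)}, f {i, i + ⟨1, by omega⟩}) :
    -- all n cycle inequalities
    ∀ i : Fin n, f {i, i + ⟨1, by omega⟩} + ∑ j ∈ Finset.univ \ {i, i + ⟨1, by omega⟩}, f {j}
      ≤ ∑ j ∈ Finset.univ \ {i}, f {j, j + ⟨1, by omega⟩} := by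
  haveI : NeZero n := ⟨by omega⟩
  have hone : (⟨1, by omega⟩ : Fin n) = 1 := by
    ext; simp [Fin.val_one', Nat.mod_eq_of_lt (show 1 < n by omega)]
  simp only [hone] at h2 h3 h4 hchain ⊢
  have h1v : (1 : Fin n).val = 1 := by
    simp [Fin.val_one', Nat.mod_eq_of_lt (show 1 < n by omega)]
  set L : Fin n := ⟨n - 1, by omega⟩ with hL
  have hLval : L.val = n - 1 := rfl
  have hzero : (⟨0, by omega⟩ : Fin n) = 0 := rfl
  have h0v : (0 : Fin n).val = 0 := rfl
  rw [hzero] at hind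
  -- val of j - 1 and j + 1
  have hsub : ∀ j : Fin n, j.val ≠ 0 → (j - 1).val = j.val - 1 := by
    intro j hjv
    rw [Fin.sub_def]
    simp only [h1v]
    have hrw : n - 1 + j.val = (j.val - 1) + 1 * n := by omega
    show (n - 1 + j.val) % n = j.val - 1
    rw [hrw, Nat.add_mul_mod_self_right, Nat.mod_eq_of_lt (by omega)]
  have hadd : ∀ j : Fin n, j.val < n - 1 → (j + 1).val = j.val + 1 := by
    intro j hj
    rw [Fin.add_def]
    simp only [h1v]
    exact Nat.mod_eq_of_lt (by omega)
  have hsubadd : ∀ j : Fin n, j - 1 + 1 = j := fun j => sub_add_cancel j 1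
  have hLadd : L + 1 = 0 := by
    apply Fin.ext
    show (L.val + (1 : Fin n).val) % n = (0 : Fin n).val
    rw [h1v, hLval, h0v, Nat.sub_add_cancel (by omega), Nat.mod_self]
  -- the rotated chain inequality
  have key : ∀ k : Fin n, ∑ i : Fin n, f {i} ≤ ∑ j ∈ Finset.univ \ {k}, f {j, j + 1} := by
    intro k
    by_cases hk : k = L
    · subst hk; exact hchain
    · have hkL : k.val ≠ n - 1 := by
        intro h; exact hk (Fin.ext (by rw [hLval]; exact h))
      have hkv : k.val < n - 1 := by have := k.isLt; omega
      have hLne0 : L ≠ (0 : Fin n) := by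
        intro h; have := congrArg Fin.val h; rw [hLval, h0v] at this; omega
      have hLmem : L ∈ Finset.univ \ {k} := by
        rw [Finset.mem_sdiff]
        exact ⟨Finset.mem_univ _, by
          simp only [Finset.mem_singleton]; exact fun h => hk h.symm⟩
      rw [← Finset.sum_erase_add _ _ hLmem]
      have herase : (Finset.univ \ {k}).erase L = Finset.univ \ {k, L} := by
        ext x
        simp only [Finset.mem_erase, Finset.mem_sdiff, Finset.mem_univ, true_and,
          Finset.mem_singleton, Finset.mem_insert, not_or]
        tauto
      rw [herase]
      have hLedge : f {L, L + 1} = f {(0 : Fin n)} + f {L} := by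
        rw [hLadd, Finset.pair_comm]; exact hind
      rw [hLedge]
      have hpair : ∑ j ∈ ({0, L} : Finset (Fin n)), f {j} = f {(0 : Fin n)} + f {L} :=
        Finset.sum_pair hLne0.symm
      have hsplit : ∑ i : Fin n, f {i}
          = ∑ j ∈ Finset.univ \ {(0 : Fin n), L}, f {j}
            + ∑ j ∈ ({0, L} : Finset (Fin n)), f {j} :=
        (Finset.sum_sdiff (Finset.subset_univ _)).symm
      rw [hsplit, hpair]
      gcongr
      set φ : Fin n → Fin n := fun j => if j.val ≤ k.val then j - 1 else j with hφ
      set ψ : Fin n → Fin n := fun b => if b.val < k.val then b + 1 else b with hψ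
      calc ∑ j ∈ Finset.univ \ {(0 : Fin n), L}, f {j}
          ≤ ∑ j ∈ Finset.univ \ {(0 : Fin n), L}, f {φ j, φ j + 1} := by
            apply Finset.sum_le_sum
            intro j hj
            simp only [Finset.mem_sdiff, Finset.mem_insert, Finset.mem_singleton,
              Finset.mem_univ, true_and, not_or] at hj
            by_cases hc : j.val ≤ k.val
            · have heq : φ j = j - 1 := if_pos hc
              rw [heq, hsubadd]
              have := h3 (j - 1)
              rwa [hsubadd] at this
            · have heq : φ j = j := if_neg hc
              rw [heq]; exact h2 j
        _ = ∑ j ∈ Finset.univ \ {k, L}, f {j, j + 1} := by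
            apply Finset.sum_nbij' φ ψ
            · intro a ha
              simp only [Finset.mem_sdiff, Finset.mem_insert, Finset.mem_singleton,
                Finset.mem_univ, true_and, not_or] at ha ⊢
              have ha0 : a.val ≠ 0 := fun h => ha.1 (Fin.ext (by rw [h, h0v]))
              have haL : a.val ≠ n - 1 := fun h => ha.2 (Fin.ext (by rw [h, hLval]))
              by_cases hc : a.val ≤ k.val
              · have hv : (φ a).val = a.val - 1 := by
                  rw [show φ a = a - 1 from if_pos hc]; exact hsub a ha0
                refine ⟨fun h => ?_, fun h => ?_⟩
                · have := congrArg Fin.val h; rw [hv] at this; omega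
                · have := congrArg Fin.val h; rw [hv, hLval] at this; omega
              · have heq : φ a = a := if_neg hc
                rw [heq]
                refine ⟨fun h => ?_, fun h => ha.2 h⟩
                have := congrArg Fin.val h; omega
            · intro b hb
              simp only [Finset.mem_sdiff, Finset.mem_insert, Finset.mem_singleton,
                Finset.mem_univ, true_and, not_or] at hb ⊢
              have hbk : b.val ≠ k.val := fun h => hb.1 (Fin.ext h)
              have hbL : b.val ≠ n - 1 := fun h => hb.2 (Fin.ext (by rw [h, hLval]))
              by_cases hc : b.val < k.val
              · have hv : (ψ b).val = b.val + 1 := by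
                  rw [show ψ b = b + 1 from if_pos hc]; exact hadd b (by omega)
                refine ⟨fun h => ?_, fun h => ?_⟩
                · have := congrArg Fin.val h; rw [hv, h0v] at this; omega
                · have := congrArg Fin.val h; rw [hv, hLval] at this; omega
              · have heq : ψ b = b := if_neg hc
                rw [heq]
                refine ⟨fun h => ?_, fun h => hb.2 h⟩
                have := congrArg Fin.val h; rw [h0v] at this; omega
            · intro a ha
              simp only [Finset.mem_sdiff, Finset.mem_insert, Finset.mem_singleton,
                Finset.mem_univ, true_and, not_or] at ha
              have ha0 : a.val ≠ 0 := fun h => ha.1 (Fin.ext (by rw [h, h0v]))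
              by_cases hc : a.val ≤ k.val
              · have heq : φ a = a - 1 := if_pos hc
                have hv : (φ a).val = a.val - 1 := by rw [heq]; exact hsub a ha0
                have hlt : (φ a).val < k.val := by omega
                rw [show ψ (φ a) = φ a + 1 from if_pos hlt, heq, hsubadd]
              · have heq : φ a = a := if_neg hc
                rw [heq]
                exact if_neg (by omega)
            · intro b hb
              simp only [Finset.mem_sdiff, Finset.mem_insert, Finset.mem_singleton,
                Finset.mem_univ, true_and, not_or] at hb
              by_cases hc : b.val < k.val
              · have heq : ψ b = b + 1 := if_pos hc
                have hv : (ψ b).val = b.val + 1 := by rw [heq]; exact hadd b (by omega)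
                have hle : (ψ b).val ≤ k.val := by omega
                rw [show φ (ψ b) = ψ b - 1 from if_pos hle, heq, add_sub_cancel_right]
              · have heq : ψ b = b := if_neg hc
                rw [heq]
                exact if_neg (by omega)
            · intro a ha
              rfl
  -- the main goal
  intro i
  have hne : i ≠ i + 1 := by
    intro h
    have h' := congrArg Fin.val h
    rw [Fin.val_add, h1v] at h'
    rcases Nat.lt_or_ge (i.val + 1) n with hlt | hge
    · rw [Nat.mod_eq_of_lt hlt] at h'; omega
    · have hin : i.val + 1 = n := by have := i.isLt; omega
      rw [hin, Nat.mod_self] at h'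
      have := i.isLt; omega
  have hsum : ∑ j ∈ Finset.univ \ {i, i + 1}, f {j} + (f {i} + f {i + 1})
      = ∑ j : Fin n, f {j} := by
    have hpair : ∑ j ∈ ({i, i + 1} : Finset (Fin n)), f {j} = f {i} + f {i + 1} :=
      Finset.sum_pair hne
    rw [← hpair]
    exact Finset.sum_sdiff (Finset.subset_univ _)
  have hkey := key i
  have h4i := h4 i
  linarith
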